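/- Let f₁ ∈ L²(ℝ₊^{n₁}), f₂ ∈ L²(ℝ₊^{m₁}), g₁ ∈ L²(ℝ₊^{n₂}), g₂ ∈ L²(ℝ₊^{m₂}), and let p ≤ min(n₁,n₂), r ≤ min(m₁,m₂). Then the bicontraction of the elementary tensors satisfies (f₁ ⊗ f₂) ⌢_{p,r} (g₁ ⊗ g₂) = (f₁ ⌢_p g₁) ⊗ (g₂ ⌢_r f₂), where ⌢_p denotes the p-th nested contraction. -/

import Mathlib

open MeasureTheory

/-- The `p`-th nested contraction of `f ∈ L²(ℝ₊^{a+p})` and `g ∈ L²(ℝ₊^{p+b})`. -/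
noncomputable def cont (a p b : ℕ) (f : (Fin (a + p) → ℝ) → ℂ) (g : (Fin (p + b) → ℝ) → ℂ) :
    (Fin (a + b) → ℝ) → ℂ := fun t =>
  ∫ s in Set.univ.pi (fun _ : Fin p => Set.Ici (0 : ℝ)),
    f (Fin.append (fun i => t (Fin.castAdd b i)) s) *
    g (Fin.append (fun i : Fin p => s i.rev) (fun i => t (Fin.natAdd a i)))

/-- The `(p,r)`-bicontraction of `f ∈ L²(ℝ₊^{n₁}) ⊗ L²(ℝ₊^{m₁})` and
`g ∈ L²(ℝ₊^{n₂}) ⊗ L²(ℝ₊^{m₂})`, where `n₁ = a₁ + p`, `m₁ = r + b₁`,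
`n₂ = p + a₂`, `m₂ = b₂ + r`. -/
noncomputable def bicont (a₁ p r b₁ a₂ b₂ : ℕ)
    (f : (Fin ((a₁ + p) + (r + b₁)) → ℝ) → ℂ)
    (g : (Fin ((p + a₂) + (b₂ + r)) → ℝ) → ℂ) :
    (Fin ((a₁ + (a₂ + b₂)) + b₁) → ℝ) → ℂ := fun t =>
  ∫ z in Set.univ.pi (fun _ : Fin (p + r) => Set.Ici (0 : ℝ)),
    f (Fin.append
        (Fin.append (fun i => t (Fin.castAdd b₁ (Fin.castAdd (a₂ + b₂) i)))
          (fun i : Fin p => z (Fin.castAdd r i.rev)))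
        (Fin.append (fun i : Fin r => z (Fin.natAdd p i))
          (fun i => t (Fin.natAdd (a₁ + (a₂ + b₂)) i)))) *
    g (fun j =>
        (Fin.append
          (Fin.append (fun i : Fin p => z (Fin.castAdd r i))
            (fun i => t (Fin.castAdd b₁ (Fin.natAdd a₁ i))))
          (fun i : Fin r => z (Fin.natAdd p i.rev)))
        (Fin.cast (by omega : (p + a₂) + (b₂ + r) = (p + (a₂ + b₂)) + r) j))

noncomputable def splitEquiv (p r : ℕ) : (Fin (p + r) → ℝ) ≃ᵐ (Fin p → ℝ) × (Fin r → ℝ) :=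
  (MeasurableEquiv.piCongrLeft (fun _ => ℝ)
    ((Equiv.sumCongr Fin.revPerm Fin.revPerm).trans finSumFinEquiv)).symm.trans
    (MeasurableEquiv.sumPiEquivProdPi fun _ => ℝ)

lemma splitEquiv_apply (p r : ℕ) (z : Fin (p + r) → ℝ) :
    splitEquiv p r z =
      (fun i => z (Fin.castAdd r i.rev), fun k => z (Fin.natAdd p k.rev)) := by
  rfl

lemma splitEquiv_mp (p r : ℕ) : MeasurePreserving (splitEquiv p r) volume volume :=
  (volume_measurePreserving_sumPiEquivProdPi fun _ : Fin p ⊕ Fin r => ℝ).comp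
    ((volume_measurePreserving_piCongrLeft (fun _ : Fin (p + r) => ℝ)
      ((Equiv.sumCongr Fin.revPerm Fin.revPerm).trans finSumFinEquiv)).symm _)

lemma split_setIntegral (p r : ℕ) (F : (Fin p → ℝ) → ℂ) (G : (Fin r → ℝ) → ℂ) :
    ∫ z in Set.univ.pi (fun _ : Fin (p + r) => Set.Ici (0:ℝ)),
      F (fun i => z (Fin.castAdd r i.rev)) * G (fun k => z (Fin.natAdd p k.rev)) =
    (∫ s in Set.univ.pi (fun _ : Fin p => Set.Ici (0:ℝ)), F s) *
    ∫ u in Set.univ.pi (fun _ : Fin r => Set.Ici (0:ℝ)), G u := by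
  set S' : Set ((Fin p → ℝ) × (Fin r → ℝ)) :=
    (Set.univ.pi fun _ : Fin p => Set.Ici (0:ℝ)) ×ˢ
      (Set.univ.pi fun _ : Fin r => Set.Ici (0:ℝ)) with hS'
  have hmeas : MeasurableSet S' :=
    (MeasurableSet.univ_pi fun _ => measurableSet_Ici).prod
      (MeasurableSet.univ_pi fun _ => measurableSet_Ici)
  have hpre : (splitEquiv p r) ⁻¹' S' =
      Set.univ.pi fun _ : Fin (p + r) => Set.Ici (0:ℝ) := by
    ext z
    simp only [hS', Set.mem_preimage, splitEquiv_apply, Set.mem_prod, Set.mem_pi,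
      Set.mem_univ, forall_true_left, true_implies]
    constructor
    · rintro ⟨h1, h2⟩ j
      rcases j with ⟨v, hv⟩
      by_cases hvp : v < p
      · have h := h1 (Fin.rev ⟨v, hvp⟩)
        rw [Fin.rev_rev] at h
        have e : (⟨v, hv⟩ : Fin (p + r)) = Fin.castAdd r ⟨v, hvp⟩ := Fin.ext rfl
        rw [e]; exact h
      · have h := h2 (Fin.rev ⟨v - p, by omega⟩)
        rw [Fin.rev_rev] at h
        have e : (⟨v, hv⟩ : Fin (p + r)) = Fin.natAdd p ⟨v - p, by omega⟩ :=
          Fin.ext (by simp; omega)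
        rw [e]; exact h
    · intro h
      exact ⟨fun i => h _, fun k => h _⟩
  have step : ∫ z in Set.univ.pi (fun _ : Fin (p + r) => Set.Ici (0:ℝ)),
      F (fun i => z (Fin.castAdd r i.rev)) * G (fun k => z (Fin.natAdd p k.rev)) =
      ∫ w in S', F w.1 * G w.2 := by
    have h1 := MeasureTheory.integral_map_equiv
      (μ := (volume : Measure (Fin (p + r) → ℝ)).restrict ((splitEquiv p r) ⁻¹' S'))
      (splitEquiv p r) (fun w : (Fin p → ℝ) × (Fin r → ℝ) => F w.1 * G w.2)
    rw [← Measure.restrict_map (splitEquiv p r).measurable hmeas,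
      (splitEquiv_mp p r).map_eq] at h1
    simp only [splitEquiv_apply] at h1
    rw [← hpre]
    exact h1.symm
  rw [step, hS', Measure.volume_eq_prod, setIntegral_prod_mul]

lemma append_val {α : Sort*} {m n : ℕ} (A : Fin m → α) (B : Fin n → α) (j : Fin (m + n)) :
    Fin.append A B j =
      if h : (j : ℕ) < m then A ⟨j, h⟩ else B ⟨(j : ℕ) - m, by omega⟩ := by
  split_ifs with h
  · have e : j = Fin.castAdd n ⟨j, h⟩ := Fin.ext rfl
    conv_lhs => rw [e]
    rw [Fin.append_left]
  · have e : j = Fin.natAdd m ⟨(j : ℕ) - m, by omega⟩ := Fin.ext (by simp; omega)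
    conv_lhs => rw [e]
    rw [Fin.append_right]

lemma cont_append (a p b : ℕ) (f : (Fin (a + p) → ℝ) → ℂ) (g : (Fin (p + b) → ℝ) → ℂ)
    (u : Fin a → ℝ) (v : Fin b → ℝ) :
    cont a p b f g (Fin.append u v) =
      ∫ s in Set.univ.pi (fun _ : Fin p => Set.Ici (0 : ℝ)),
        f (Fin.append u s) * g (Fin.append (fun i : Fin p => s i.rev) v) := by
  unfold cont
  simp only [Fin.append_left, Fin.append_right]

/-- on elementary tensors, the `(p,r)`-bicontraction factorizes as
`(f₁ ⊗ f₂) ⌢_{p,r} (g₁ ⊗ g₂) = (f₁ ⌢_p g₁) ⊗ (g₂ ⌢_r f₂)`. -/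
theorem bicont_tensor (a₁ p r b₁ a₂ b₂ : ℕ)
    (f₁ : (Fin (a₁ + p) → ℝ) → ℂ) (f₂ : (Fin (r + b₁) → ℝ) → ℂ)
    (g₁ : (Fin (p + a₂) → ℝ) → ℂ) (g₂ : (Fin (b₂ + r) → ℝ) → ℂ)
    (hf₁ : MemLp f₁ 2 ((volume : Measure (Fin (a₁ + p) → ℝ)).restrict
      (Set.univ.pi fun _ => Set.Ici 0)))
    (hf₂ : MemLp f₂ 2 ((volume : Measure (Fin (r + b₁) → ℝ)).restrict
      (Set.univ.pi fun _ => Set.Ici 0)))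
    (hg₁ : MemLp g₁ 2 ((volume : Measure (Fin (p + a₂) → ℝ)).restrict
      (Set.univ.pi fun _ => Set.Ici 0)))
    (hg₂ : MemLp g₂ 2 ((volume : Measure (Fin (b₂ + r) → ℝ)).restrict
      (Set.univ.pi fun _ => Set.Ici 0))) :
    ∀ t, bicont a₁ p r b₁ a₂ b₂
        (fun v => f₁ (fun i => v (Fin.castAdd (r + b₁) i)) *
          f₂ (fun i => v (Fin.natAdd (a₁ + p) i)))
        (fun v => g₁ (fun i => v (Fin.castAdd (b₂ + r) i)) *
          g₂ (fun i => v (Fin.natAdd (p + a₂) i))) t =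
      cont a₁ p a₂ f₁ g₁
          (Fin.append (fun j : Fin a₁ => t (Fin.castAdd b₁ (Fin.castAdd (a₂ + b₂) j)))
            (fun j : Fin a₂ => t (Fin.castAdd b₁ (Fin.natAdd a₁ (Fin.castAdd b₂ j))))) *
        cont b₂ r b₁ g₂ f₂
          (Fin.append (fun j : Fin b₂ => t (Fin.castAdd b₁ (Fin.natAdd a₁ (Fin.natAdd a₂ j))))
            (fun j : Fin b₁ => t (Fin.natAdd (a₁ + (a₂ + b₂)) j))) := by
  intro t
  rw [cont_append, cont_append, ← split_setIntegral]
  unfold bicont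
  congr 1
  funext z
  simp only [Fin.append_left, Fin.append_right, Fin.rev_rev]
  have hC : (fun i : Fin (p + a₂) =>
      (Fin.append
        (Fin.append (fun i : Fin p => z (Fin.castAdd r i))
          (fun i : Fin (a₂ + b₂) => t (Fin.castAdd b₁ (Fin.natAdd a₁ i))))
        (fun i : Fin r => z (Fin.natAdd p i.rev)))
        (Fin.cast (by omega : (p + a₂) + (b₂ + r) = (p + (a₂ + b₂)) + r)
          (Fin.castAdd (b₂ + r) i))) =
      Fin.append (fun i : Fin p => z (Fin.castAdd r i))
        (fun i : Fin a₂ => t (Fin.castAdd b₁ (Fin.natAdd a₁ (Fin.castAdd b₂ i)))) := by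
    funext j
    simp only [append_val, Fin.coe_cast, Fin.coe_castAdd, Fin.coe_natAdd, Fin.val_rev]
    split_ifs <;>
      first
        | omega
        | (refine congrArg z (Fin.ext ?_) <;> simp <;> omega)
        | (refine congrArg t (Fin.ext ?_) <;> simp <;> omega)
  have hD : (fun i : Fin (b₂ + r) =>
      (Fin.append
        (Fin.append (fun i : Fin p => z (Fin.castAdd r i))
          (fun i : Fin (a₂ + b₂) => t (Fin.castAdd b₁ (Fin.natAdd a₁ i))))
        (fun i : Fin r => z (Fin.natAdd p i.rev)))
        (Fin.cast (by omega : (p + a₂) + (b₂ + r) = (p + (a₂ + b₂)) + r)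
          (Fin.natAdd (p + a₂) i))) =
      Fin.append (fun j : Fin b₂ => t (Fin.castAdd b₁ (Fin.natAdd a₁ (Fin.natAdd a₂ j))))
        (fun k : Fin r => z (Fin.natAdd p k.rev)) := by
    funext j
    simp only [append_val, Fin.coe_cast, Fin.coe_castAdd, Fin.coe_natAdd, Fin.val_rev]
    split_ifs <;>
      first
        | omega
        | (refine congrArg z (Fin.ext ?_) <;> simp <;> omega)
        | (refine congrArg t (Fin.ext ?_) <;> simp <;> omega)
  rw [hC, hD]
  ring
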